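/- Let η : H → G be an envelope with trivial Galois group (the only endomorphism f of G with f∘η = η is the identity). Let ψ_1, ψ_2 : G → G be homomorphisms with ψ_1∘η = ψ_2∘η. Suppose for some i, j ≥ 0 and all x ∈ G: [Γ^{i+1}G, ψ_1(x)ψ_2(x)⁻¹, G, …(j times)…, G] = 1 and [Γ^iG, ψ_1(x)ψ_2(x)⁻¹, G, …(j+1 times)…, G] = 1. Then [Γ^iG, ψ_1(x)ψ_2(x)⁻¹, G, …(j times)…, G] = 1 for all x ∈ G. -/

import Mathlib

open scoped commutatorElement

/-- Iterated left-normed commutator `[a, z₁, …, z_r]`. -/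
def itComm {G : Type} [Group G] (a : G) (zs : List G) : G :=
  zs.foldl (fun x y => ⁅x, y⁆) a

namespace RepetitionAux

variable {G : Type} [Group G]

/-- `P j w` : all `j`-fold iterated commutators starting from `w` vanish. -/
def P (j : ℕ) (w : G) : Prop :=
  ∀ zs : List G, zs.length = j → itComm w zs = 1

lemma itComm_nil (w : G) : itComm w [] = w := rfl

lemma itComm_cons (w z : G) (zs : List G) : itComm w (z :: zs) = itComm ⁅w, z⁆ zs := rfl

lemma itComm_append_singleton (w t : G) (zs : List G) :
    itComm w (zs ++ [t]) = ⁅itComm w zs, t⁆ := by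
  simp [itComm, List.foldl_append]

lemma itComm_one (zs : List G) : itComm (1 : G) zs = 1 := by
  induction zs with
  | nil => rfl
  | cons z zs ih => rw [itComm_cons, commutatorElement_one_left]; exact ih

lemma itComm_conj (g w : G) (zs : List G) :
    itComm (g * w * g⁻¹) zs = g * itComm w (zs.map fun z => g⁻¹ * z * g) * g⁻¹ := by
  induction zs generalizing w with
  | nil => simp [itComm_nil]
  | cons z zs ih =>
      rw [itComm_cons, List.map_cons, itComm_cons]
      have h : ⁅g * w * g⁻¹, z⁆ = g * ⁅w, g⁻¹ * z * g⁆ * g⁻¹ := by group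
      rw [h, ih]

lemma P_one (j : ℕ) : P j (1 : G) := fun zs _ => itComm_one zs

lemma P_conj {j : ℕ} {w : G} (hw : P j w) (g : G) : P j (g * w * g⁻¹) := by
  intro zs hzs
  rw [itComm_conj, hw _ (by simp [hzs]), mul_one, mul_inv_cancel]

lemma P_comm {j : ℕ} {w : G} (hw : P (j + 1) w) (z : G) : P j ⁅w, z⁆ := by
  intro zs hzs
  have := hw (z :: zs) (by simp [hzs])
  rwa [itComm_cons] at this

lemma P_mul : ∀ {j : ℕ} {w w' : G}, P j w → P j w' → P j (w * w') := by
  intro j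
  induction j with
  | zero =>
      intro w w' hw hw'
      have h1 : w = 1 := hw [] rfl
      have h2 : w' = 1 := hw' [] rfl
      rw [h1, h2, mul_one]; exact P_one 0
  | succ j ih =>
      intro w w' hw hw' zs hzs
      match zs, hzs with
      | z :: rest, hzs =>
        have hrest : rest.length = j := by simpa using hzs
        rw [itComm_cons]
        have hs : ⁅w * w', z⁆ = (w * ⁅w', z⁆ * w⁻¹) * ⁅w, z⁆ := by group
        rw [hs]
        exact ih (P_conj (P_comm hw' z) w) (P_comm hw z) rest hrest

lemma P_central {j : ℕ} {w : G} (hw : P (j + 1) w) {zs : List G} (hzs : zs.length = j)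
    (t : G) : Commute t (itComm w zs) := by
  have h := hw (zs ++ [t]) (by simp [hzs])
  rw [itComm_append_singleton] at h
  exact (commutatorElement_eq_one_iff_commute.mp h).symm

/-- Combined key lemma, proved by induction on `j`:
(a) multiplying a `P (j+1)` element by a `P j` element (either side) does not change
`itComm` over length-`j` lists; (b) conjugation invariance; (c) multiplicativity. -/
lemma key : ∀ j : ℕ,
    (∀ w n : G, P (j + 1) w → P j n → ∀ zs : List G, zs.length = j →
      itComm (w * n) zs = itComm w zs ∧ itComm (n * w) zs = itComm w zs) ∧
    (∀ w g : G, P (j + 1) w → ∀ zs : List G, zs.length = j →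
      itComm (g * w * g⁻¹) zs = itComm w zs) ∧
    (∀ w w' : G, P (j + 1) w → P (j + 1) w' → ∀ zs : List G, zs.length = j →
      itComm (w * w') zs = itComm w zs * itComm w' zs) := by
  intro j
  induction j with
  | zero =>
      refine ⟨?_, ?_, ?_⟩
      · intro w n _ hn zs hzs
        rw [List.length_eq_zero_iff] at hzs; subst hzs
        have hn1 : n = 1 := hn [] rfl
        simp [itComm_nil, hn1]
      · intro w g hw zs hzs
        rw [List.length_eq_zero_iff] at hzs; subst hzs
        simp only [itComm_nil]
        have hc : Commute w g := commutatorElement_eq_one_iff_commute.mp (by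
          have := hw [g] rfl
          rwa [itComm_cons, itComm_nil] at this)
        rw [← hc.eq, mul_assoc, mul_inv_cancel, mul_one]
      · intro w w' _ _ zs hzs
        rw [List.length_eq_zero_iff] at hzs; subst hzs
        simp [itComm_nil]
  | succ j ih =>
      obtain ⟨iha, ihb, ihc⟩ := ih
      -- (d): z ↦ itComm ⁅w,z⁆ rest is a homomorphism with central values,
      -- hence invariant under conjugation of z.
      have hd : ∀ w : G, P (j + 2) w → ∀ rest : List G, rest.length = j →
          ∀ g z : G, itComm ⁅w, g⁻¹ * z * g⁆ rest = itComm ⁅w, z⁆ rest := by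
        intro w hw rest hrest g z
        have hom : ∀ s t : G,
            itComm ⁅w, s * t⁆ rest = itComm ⁅w, s⁆ rest * itComm ⁅w, t⁆ rest := by
          intro s t
          have hsplit : ⁅w, s * t⁆ = ⁅w, s⁆ * (s * ⁅w, t⁆ * s⁻¹) := by group
          rw [hsplit,
            ihc _ _ (P_comm hw s) (P_conj (P_comm hw t) s) rest hrest,
            ihb _ _ (P_comm hw t) rest hrest]
        have h1 : itComm ⁅w, (1 : G)⁆ rest = 1 := by
          rw [commutatorElement_one_right]; exact itComm_one rest
        have hinv : ∀ s : G, itComm ⁅w, s⁻¹⁆ rest = (itComm ⁅w, s⁆ rest)⁻¹ := by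
          intro s
          have h := hom s s⁻¹
          rw [mul_inv_cancel, h1] at h
          exact (inv_eq_of_mul_eq_one_right h.symm).symm
        have hcent : Commute (itComm ⁅w, g⁆ rest) (itComm ⁅w, z⁆ rest) :=
          P_central (P_comm hw z) hrest _
        calc itComm ⁅w, g⁻¹ * z * g⁆ rest
            = itComm ⁅w, g⁻¹⁆ rest * (itComm ⁅w, z⁆ rest * itComm ⁅w, g⁆ rest) := by
              rw [hom (g⁻¹ * z) g, hom g⁻¹ z, mul_assoc]
          _ = itComm ⁅w, g⁻¹⁆ rest * (itComm ⁅w, g⁆ rest * itComm ⁅w, z⁆ rest) := by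
              rw [← hcent.eq]
          _ = itComm ⁅w, z⁆ rest := by
              rw [hinv, ← mul_assoc, inv_mul_cancel, one_mul]
      refine ⟨?_, ?_, ?_⟩
      · intro w n hw hn zs hzs
        match zs, hzs with
        | z :: rest, hzs =>
          have hrest : rest.length = j := by simpa using hzs
          constructor
          · rw [itComm_cons, itComm_cons]
            have hsplit : ⁅w * n, z⁆ = (w * ⁅n, z⁆ * w⁻¹) * ⁅w, z⁆ := by group
            rw [hsplit]
            exact (iha _ _ (P_comm hw z) (P_conj (P_comm hn z) w) rest hrest).2
          · rw [itComm_cons, itComm_cons]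
            have hsplit : ⁅n * w, z⁆ = (n * ⁅w, z⁆ * n⁻¹) * ⁅n, z⁆ := by group
            rw [hsplit,
              (iha _ _ (P_conj (P_comm hw z) n) (P_comm hn z) rest hrest).1,
              ihb _ _ (P_comm hw z) rest hrest]
      · intro w g hw zs hzs
        match zs, hzs with
        | z :: rest, hzs =>
          have hrest : rest.length = j := by simpa using hzs
          rw [itComm_cons, itComm_cons]
          have h : ⁅g * w * g⁻¹, z⁆ = g * ⁅w, g⁻¹ * z * g⁆ * g⁻¹ := by group
          rw [h, ihb _ _ (P_comm hw (g⁻¹ * z * g)) rest hrest, hd w hw rest hrest g z]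
      · intro w w' hw hw' zs hzs
        match zs, hzs with
        | z :: rest, hzs =>
          have hrest : rest.length = j := by simpa using hzs
          rw [itComm_cons, itComm_cons, itComm_cons]
          have hsplit : ⁅w * w', z⁆ = (w * ⁅w', z⁆ * w⁻¹) * ⁅w, z⁆ := by group
          rw [hsplit,
            ihc _ _ (P_conj (P_comm hw' z) w) (P_comm hw z) rest hrest,
            ihb _ _ (P_comm hw' z) rest hrest]
          exact (P_central (P_comm hw' z) hrest (itComm ⁅w, z⁆ rest)).eq.symm

end RepetitionAux

open RepetitionAux in
theorem repetition_lemma {H G : Type} [Group H] [Group G] (η : H →* G)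
    (hsurj : Function.Surjective (fun f : G →* G => f.comp η))
    (htriv : ∀ f : G →* G, f.comp η = η → f = MonoidHom.id G)
    (ψ₁ ψ₂ : G →* G) (hψ : ψ₁.comp η = ψ₂.comp η) (i j : ℕ)
    (h1 : ∀ x : G, ∀ a ∈ (⊤ : Subgroup G).lowerCentralSeries (i + 1), ∀ zs : List G, zs.length = j →
      itComm ⁅a, ψ₁ x * (ψ₂ x)⁻¹⁆ zs = 1)
    (h2 : ∀ x : G, ∀ a ∈ (⊤ : Subgroup G).lowerCentralSeries i, ∀ zs : List G, zs.length = j + 1 →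
      itComm ⁅a, ψ₁ x * (ψ₂ x)⁻¹⁆ zs = 1) :
    ∀ x : G, ∀ a ∈ (⊤ : Subgroup G).lowerCentralSeries i, ∀ zs : List G, zs.length = j →
      itComm ⁅a, ψ₁ x * (ψ₂ x)⁻¹⁆ zs = 1 := by
  intro x a ha zs hzs
  obtain ⟨keyA, keyB, keyC⟩ := RepetitionAux.key (G := G) j
  have hP2 : ∀ g : G, P (j + 1) ⁅a, ψ₁ g * (ψ₂ g)⁻¹⁆ :=
    fun g zs' hzs' => h2 g a ha zs' hzs'
  have hP1 : ∀ (e : G), e ∈ (⊤ : Subgroup G).lowerCentralSeries (i + 1) → ∀ g : G,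
      P j ⁅e, ψ₁ g * (ψ₂ g)⁻¹⁆ :=
    fun e he g zs' hzs' => h1 g e he zs' hzs'
  -- u g := itComm ⁅a, ψ₁ g (ψ₂ g)⁻¹⁆ zs ; key multiplicativity
  have humul : ∀ g h : G,
      itComm ⁅a, ψ₁ (g * h) * (ψ₂ (g * h))⁻¹⁆ zs
        = itComm ⁅a, ψ₁ h * (ψ₂ h)⁻¹⁆ zs * itComm ⁅a, ψ₁ g * (ψ₂ g)⁻¹⁆ zs := by
    intro g h
    have hmem : ⁅a⁻¹, (ψ₁ g)⁻¹⁆ ∈ (⊤ : Subgroup G).lowerCentralSeries (i + 1) := by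
      rw [Subgroup.lowerCentralSeries_succ]
      apply Subgroup.subset_closure
      exact ⟨a⁻¹, inv_mem ha, (ψ₁ g)⁻¹, Subgroup.mem_top _, by group⟩
    have hn : P j (ψ₁ g * (a * ⁅⁅a⁻¹, (ψ₁ g)⁻¹⁆, ψ₁ h * (ψ₂ h)⁻¹⁆ * a⁻¹) * (ψ₁ g)⁻¹) :=
      P_conj (P_conj (hP1 _ hmem h) a) (ψ₁ g)
    have hm : P (j + 1) (ψ₁ g * ⁅a, ψ₁ h * (ψ₂ h)⁻¹⁆ * (ψ₁ g)⁻¹) :=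
      P_conj (hP2 h) (ψ₁ g)
    have hm' : P (j + 1) ((ψ₁ g * (ψ₁ h * (ψ₂ h)⁻¹) * (ψ₁ g)⁻¹) * ⁅a, ψ₁ g * (ψ₂ g)⁻¹⁆ *
        (ψ₁ g * (ψ₁ h * (ψ₂ h)⁻¹) * (ψ₁ g)⁻¹)⁻¹) :=
      P_conj (hP2 g) (ψ₁ g * (ψ₁ h * (ψ₂ h)⁻¹) * (ψ₁ g)⁻¹)
    have hW := P_mul hm hm'
    have hrw : ⁅a, ψ₁ (g * h) * (ψ₂ (g * h))⁻¹⁆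
        = (ψ₁ g * (a * ⁅⁅a⁻¹, (ψ₁ g)⁻¹⁆, ψ₁ h * (ψ₂ h)⁻¹⁆ * a⁻¹) * (ψ₁ g)⁻¹) *
          ((ψ₁ g * ⁅a, ψ₁ h * (ψ₂ h)⁻¹⁆ * (ψ₁ g)⁻¹) *
           ((ψ₁ g * (ψ₁ h * (ψ₂ h)⁻¹) * (ψ₁ g)⁻¹) * ⁅a, ψ₁ g * (ψ₂ g)⁻¹⁆ *
            (ψ₁ g * (ψ₁ h * (ψ₂ h)⁻¹) * (ψ₁ g)⁻¹)⁻¹)) := by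
      rw [map_mul, map_mul]; group
    rw [hrw, (keyA _ _ hW hn zs hzs).2, keyC _ _ hm hm' zs hzs,
      keyB _ _ (hP2 h) zs hzs, keyB _ _ (hP2 g) zs hzs]
  have hucentral : ∀ g t : G, Commute t (itComm ⁅a, ψ₁ g * (ψ₂ g)⁻¹⁆ zs) :=
    fun g t => P_central (hP2 g) hzs t
  -- the homomorphism f g = u g * g
  let f : G →* G :=
    { toFun := fun g => itComm ⁅a, ψ₁ g * (ψ₂ g)⁻¹⁆ zs * g
      map_one' := by
        show itComm ⁅a, ψ₁ (1 : G) * (ψ₂ (1 : G))⁻¹⁆ zs * 1 = 1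
        rw [map_one, map_one, inv_one, one_mul, commutatorElement_one_right, itComm_one,
          one_mul]
      map_mul' := by
        intro g h
        show itComm ⁅a, ψ₁ (g * h) * (ψ₂ (g * h))⁻¹⁆ zs * (g * h)
          = itComm ⁅a, ψ₁ g * (ψ₂ g)⁻¹⁆ zs * g * (itComm ⁅a, ψ₁ h * (ψ₂ h)⁻¹⁆ zs * h)
        rw [humul g h]
        have c1 := (hucentral h (itComm ⁅a, ψ₁ g * (ψ₂ g)⁻¹⁆ zs)).eq
        have c2 := (hucentral h g).eq
        calc itComm ⁅a, ψ₁ h * (ψ₂ h)⁻¹⁆ zs * itComm ⁅a, ψ₁ g * (ψ₂ g)⁻¹⁆ zs * (g * h)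
            = itComm ⁅a, ψ₁ g * (ψ₂ g)⁻¹⁆ zs * itComm ⁅a, ψ₁ h * (ψ₂ h)⁻¹⁆ zs * (g * h) := by
              rw [← c1]
          _ = itComm ⁅a, ψ₁ g * (ψ₂ g)⁻¹⁆ zs * (itComm ⁅a, ψ₁ h * (ψ₂ h)⁻¹⁆ zs * g) * h := by
              group
          _ = itComm ⁅a, ψ₁ g * (ψ₂ g)⁻¹⁆ zs * (g * itComm ⁅a, ψ₁ h * (ψ₂ h)⁻¹⁆ zs) * h := by
              rw [c2]
          _ = itComm ⁅a, ψ₁ g * (ψ₂ g)⁻¹⁆ zs * g * (itComm ⁅a, ψ₁ h * (ψ₂ h)⁻¹⁆ zs * h) := by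
              group }
  have hfη : f.comp η = η := by
    ext h
    have hdη : ψ₁ (η h) * (ψ₂ (η h))⁻¹ = 1 := by
      have h' : ψ₁ (η h) = ψ₂ (η h) := by
        have := congrArg (fun φ : H →* G => φ h) hψ
        simpa using this
      rw [h', mul_inv_cancel]
    show itComm ⁅a, ψ₁ (η h) * (ψ₂ (η h))⁻¹⁆ zs * η h = η h
    rw [hdη, commutatorElement_one_right, itComm_one, one_mul]
  have hid := htriv f hfη
  have hx : itComm ⁅a, ψ₁ x * (ψ₂ x)⁻¹⁆ zs * x = x :=
    congrArg (fun φ : G →* G => φ x) hid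
  have hx' : itComm ⁅a, ψ₁ x * (ψ₂ x)⁻¹⁆ zs * x = 1 * x := by rw [hx, one_mul]
  exact mul_right_cancel hx'
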